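/- Let z : ℕ → ℝ be a real sequence (a discrete path). Then for all natural numbers s ≤ t, the sum over i from s to t-1 of (z(i+1) - z(i)) · 1_{z(i) ≥ 0} is at most z(t)⁺ - z(s)⁺, where x⁺ = max(x,0). -/

import Mathlib

/-- Discrete pathwise inequality: the gains of holding one unit while the path is
nonnegative are bounded by the change in the positive part of the path. -/
theorem discrete_pathwise_inequality (z : ℕ → ℝ) (s t : ℕ) (hst : s ≤ t) :
    ∑ i ∈ Finset.Ico s t, (z (i + 1) - z i) * (if 0 ≤ z i then 1 else 0)
      ≤ max (z t) 0 - max (z s) 0 := by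
  induction t, hst using Nat.le_induction with
  | base => simp
  | succ t ht ih =>
    rw [Finset.sum_Ico_succ_top (by omega)]
    have step : (z (t + 1) - z t) * (if 0 ≤ z t then 1 else 0)
        ≤ max (z (t + 1)) 0 - max (z t) 0 := by
      by_cases h : 0 ≤ z t
      · simp only [h, if_true, mul_one, max_eq_left h]
        have := le_max_left (z (t + 1)) 0
        linarith
      · simp only [h, if_false, mul_zero]
        push_neg at h
        rw [max_eq_right h.le]
        have := le_max_right (z (t + 1)) 0
        linarith
    linarith
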